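/- Let R be a ring that can be written as R = S + K, where S is a subring of R and K is a nil two-sided ideal of R. Then S is a GNC ring if and only if R is a GNC ring. -/

import Mathlib

/-- An element is nil-clean if it is the sum of an idempotent and a nilpotent. -/
def IsNilClean {R : Type*} [Ring R] (a : R) : Prop :=
  ∃ e q : R, IsIdempotentElem e ∧ IsNilpotent q ∧ a = e + q

/-- A ring is GNC (generalized nil-clean) if every non-unit is nil-clean. -/
def IsGNC (R : Type*) [Ring R] : Prop :=
  ∀ a : R, ¬ IsUnit a → IsNilClean a

section Aux

variable {R : Type*} [Ring R] (K : TwoSidedIdeal R)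

/-- If `x` maps to a nilpotent in the quotient by a nil ideal, `x` is nilpotent. -/
lemma aux_nilpotent_of_quot (hK : ∀ x ∈ K, IsNilpotent x) {x : R}
    (hx : IsNilpotent (K.ringCon.mk' x)) : IsNilpotent x := by
  obtain ⟨m, hm⟩ := hx
  have hmem : x ^ m ∈ K := by
    rw [TwoSidedIdeal.mem_iff]
    have : (K.ringCon.mk' (x ^ m) : K.ringCon.Quotient) = K.ringCon.mk' 0 := by
      rw [map_pow, hm, map_zero]
    exact K.ringCon.eq.mp this
  obtain ⟨j, hj⟩ := hK _ hmem
  exact ⟨m * j, by rw [pow_mul, hj]⟩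

/-- Elements of a nil ideal map to zero... and membership gives equal images. -/
lemma aux_mk_eq_of_sub_mem {x y : R} (h : x - y ∈ K) :
    (K.ringCon.mk' x : K.ringCon.Quotient) = K.ringCon.mk' y :=
  K.ringCon.eq.mpr ((K.rel_iff x y).mpr h)

/-- A nilpotent element of `R` lying in a subring is nilpotent in the subring. -/
lemma aux_nilpotent_subring (S : Subring R) {x : S} (h : IsNilpotent (x : R)) :
    IsNilpotent x := by
  obtain ⟨n, hn⟩ := h
  exact ⟨n, by ext; push_cast; exact hn⟩

/-- If `a ∈ S` is a unit in `R`, then it is a unit in `S` (given `R = S + K`, `K` nil). -/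
lemma aux_unit_descend (S : Subring R) (hK : ∀ x ∈ K, IsNilpotent x)
    (hSK : ∀ r : R, ∃ s ∈ S, ∃ k ∈ K, r = s + k) {a : S} (h : IsUnit (a : R)) :
    IsUnit a := by
  obtain ⟨u, hu⟩ := h
  obtain ⟨s, hs, k, hk, hbk⟩ := hSK (↑u⁻¹ : R)
  -- right inverse: a * s = 1 - a * k with a * k ∈ K
  have hr : (a : R) * s = 1 - (a : R) * k := by
    have h1 : (a : R) * ((↑u⁻¹ : R)) = 1 := by rw [← hu]; exact u.mul_inv
    rw [hbk, mul_add] at h1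
    exact eq_sub_of_add_eq h1
  have hl : s * (a : R) = 1 - k * (a : R) := by
    have h1 : ((↑u⁻¹ : R)) * (a : R) = 1 := by rw [← hu]; exact u.inv_mul
    rw [hbk, add_mul] at h1
    exact eq_sub_of_add_eq h1
  -- the elements 1 - a*k and 1 - k*a belong to S and are units in S
  have hakS : (1 : R) - (a : R) * k ∈ S := hr ▸ S.mul_mem a.2 hs
  have hkaS : (1 : R) - k * (a : R) ∈ S := hl ▸ S.mul_mem hs a.2
  have hakU : IsUnit (⟨1 - (a : R) * k, hakS⟩ : S) := by
    have hn : IsNilpotent ((1 : S) - ⟨1 - (a : R) * k, hakS⟩) := by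
      apply aux_nilpotent_subring S
      push_cast
      simpa using hK _ (K.mul_mem_left _ _ hk)
    simpa using IsNilpotent.isUnit_one_sub hn
  have hkaU : IsUnit (⟨1 - k * (a : R), hkaS⟩ : S) := by
    have hn : IsNilpotent ((1 : S) - ⟨1 - k * (a : R), hkaS⟩) := by
      apply aux_nilpotent_subring S
      push_cast
      simpa using hK _ (K.mul_mem_right _ _ hk)
    simpa using IsNilpotent.isUnit_one_sub hn
  -- a has a right and a left inverse in S
  obtain ⟨v, hv⟩ := hakU
  obtain ⟨w, hw⟩ := hkaU
  have hsS : s ∈ S := hs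
  have hAr : a * (⟨s, hsS⟩ * ↑v⁻¹) = 1 := by
    have h1 : a * (⟨s, hsS⟩ : S) = ↑v := by
      ext; rw [hv]; push_cast; exact hr
    rw [← mul_assoc, h1, v.mul_inv]
  have hAl : (↑w⁻¹ * ⟨s, hsS⟩) * a = 1 := by
    have h1 : (⟨s, hsS⟩ : S) * a = ↑w := by
      ext; rw [hw]; push_cast; exact hl
    rw [mul_assoc, h1, w.inv_mul]
  have heq : (↑w⁻¹ * ⟨s, hsS⟩ : S) = ⟨s, hsS⟩ * ↑v⁻¹ := by
    calc (↑w⁻¹ * ⟨s, hsS⟩ : S) = (↑w⁻¹ * ⟨s, hsS⟩) * (a * (⟨s, hsS⟩ * ↑v⁻¹)) := by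
          rw [hAr, mul_one]
      _ = ((↑w⁻¹ * ⟨s, hsS⟩) * a) * (⟨s, hsS⟩ * ↑v⁻¹) := by simp only [mul_assoc]
      _ = ⟨s, hsS⟩ * ↑v⁻¹ := by rw [hAl, one_mul]
  exact ⟨⟨a, ⟨s, hsS⟩ * ↑v⁻¹, hAr, heq ▸ hAl⟩, rfl⟩

end Aux

theorem subring_gnc_iff_gnc_of_nil_ideal {R : Type*} [Ring R] (S : Subring R)
    (K : TwoSidedIdeal R) (hK : ∀ x ∈ K, IsNilpotent x)
    (hSK : ∀ r : R, ∃ s ∈ S, ∃ k ∈ K, r = s + k) :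
    IsGNC S ↔ IsGNC R := by
  constructor
  · -- S GNC → R GNC
    intro hS r hr
    obtain ⟨s, hs, k, hk, rfl⟩ := hSK r
    have hsu : ¬ IsUnit (⟨s, hs⟩ : S) := by
      intro h
      apply hr
      have hsR : IsUnit s := h.map S.subtype
      obtain ⟨u, hu⟩ := hsR
      have : s + k = (u : R) * (1 + (↑u⁻¹ : R) * k) := by
        rw [mul_add, mul_one, ← mul_assoc, u.mul_inv, one_mul, hu]
      rw [this]
      exact u.isUnit.mul (IsNilpotent.isUnit_one_add (hK _ (K.mul_mem_left _ _ hk)))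
    obtain ⟨e, q, he, hq, heq⟩ := hS ⟨s, hs⟩ hsu
    refine ⟨(e : R), (q : R) + k, ?_, ?_, ?_⟩
    · have : (e : S) * e = e := he
      have := congrArg (Subtype.val) this
      push_cast at this
      exact this
    · apply aux_nilpotent_of_quot K hK
      have : (K.ringCon.mk' ((q : R) + k) : K.ringCon.Quotient) = K.ringCon.mk' (q : R) :=
        aux_mk_eq_of_sub_mem K (by simpa using hk)
      rw [this]
      exact (hq.map S.subtype).map K.ringCon.mk'
    · have := congrArg (Subtype.val) heq
      push_cast at this
      rw [this, add_assoc]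
  · -- R GNC → S GNC
    intro hR a ha
    have haR : ¬ IsUnit (a : R) := fun h => ha (aux_unit_descend K S hK hSK h)
    obtain ⟨e, q, he, hq, heq⟩ := hR (a : R) haR
    obtain ⟨s, hs, k, hk, hek⟩ := hSK e
    -- lifting the idempotent into S
    set φ : S →+* K.ringCon.Quotient := (K.ringCon.mk').comp S.subtype with hφ
    have hker : ∀ x ∈ RingHom.ker φ, IsNilpotent x := by
      intro x hx
      apply aux_nilpotent_subring S
      apply aux_nilpotent_of_quot K hK
      rw [RingHom.mem_ker] at hx
      exact ⟨1, by simpa [hφ] using hx⟩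
    have hse : K.ringCon.mk' s = K.ringCon.mk' e :=
      aux_mk_eq_of_sub_mem K (by rw [hek]; simpa using K.neg_mem hk)
    have hrange : (K.ringCon.mk' e : K.ringCon.Quotient) ∈ φ.range :=
      ⟨⟨s, hs⟩, by simpa [hφ] using hse⟩
    have hidem : IsIdempotentElem (K.ringCon.mk' e) := by
      unfold IsIdempotentElem
      rw [← map_mul, he]
    obtain ⟨f, hf, hfe⟩ := exists_isIdempotentElem_eq_of_ker_isNilpotent φ hker _ hrange hidem
    refine ⟨f, a - f, hf, ?_, by abel⟩
    apply aux_nilpotent_subring S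
    apply aux_nilpotent_of_quot K hK
    have hcoe : (((a - f : S) : R)) = (a : R) - (f : R) := by push_cast; ring
    have hfeR : (K.ringCon.mk' (f : R) : K.ringCon.Quotient) = K.ringCon.mk' e := hfe
    have : (K.ringCon.mk' ((a - f : S) : R) : K.ringCon.Quotient) = K.ringCon.mk' q := by
      rw [hcoe, map_sub, hfeR, heq, map_add]
      abel
    rw [this]
    exact hq.map K.ringCon.mk'
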